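/- Given a finite set X of points on the real line and a finite set J of closed intervals on the real line, the minimum size of a subset X' ⊆ X that hits every interval in J (i.e., every interval of J contains a point of X') equals the maximum size of an X-disjoint subfamily of J (a subfamily in which each point of X lies in at most one interval), provided every interval in J contains at least one point of X. -/

import Mathlib

open Classical

/-- `X'` hits every interval in `J` (intervals given by endpoint pairs). -/
def Hits (X' : Finset ℝ) (J : Finset (ℝ × ℝ)) : Prop :=
  ∀ I ∈ J, ∃ x ∈ X', x ∈ Set.Icc I.1 I.2

/-- A subfamily `J'` is `X`-disjoint: each point of `X` lies in at most one interval of `J'`. -/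
def XDisjoint (X : Finset ℝ) (J' : Finset (ℝ × ℝ)) : Prop :=
  ∀ x ∈ X, ∀ I ∈ J', ∀ I' ∈ J',
    x ∈ Set.Icc I.1 I.2 → x ∈ Set.Icc I'.1 I'.2 → I = I'

/-- Weak duality: any X-disjoint subfamily is at most as large as any hitting set. -/
lemma weak_duality (X X' : Finset ℝ) (J J' : Finset (ℝ × ℝ))
    (hX' : X' ⊆ X) (hhit : Hits X' J) (hJ' : J' ⊆ J) (hdisj : XDisjoint X J') :
    J'.card ≤ X'.card := by
  have hex : ∀ I ∈ J', ∃ x ∈ X', x ∈ Set.Icc I.1 I.2 := fun I hI => hhit I (hJ' hI)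
  classical
  set f : ℝ × ℝ → ℝ := fun I =>
    if h : ∃ x ∈ X', x ∈ Set.Icc I.1 I.2 then h.choose else 0 with hf
  have hfmem : ∀ I ∈ J', f I ∈ X' ∧ f I ∈ Set.Icc I.1 I.2 := by
    intro I hI
    have h := hex I hI
    simp only [hf, dif_pos h]
    exact ⟨h.choose_spec.1, h.choose_spec.2⟩
  apply Finset.card_le_card_of_injOn f (fun I hI => (hfmem I hI).1)
  intro I hI I' hI' heq
  exact hdisj (f I) (hX' (hfmem I hI).1) I hI I' hI' (hfmem I hI).2
    (heq ▸ (hfmem I' hI').2)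

/-- Greedy construction: a hitting set and an X-disjoint family of matching size. -/
lemma greedy (X : Finset ℝ) : ∀ J : Finset (ℝ × ℝ),
    (∀ I ∈ J, ∃ x ∈ X, x ∈ Set.Icc I.1 I.2) →
    ∃ X' J', X' ⊆ X ∧ J' ⊆ J ∧ Hits X' J ∧ XDisjoint X J' ∧ X'.card ≤ J'.card := by
  intro J
  induction J using Finset.strongInduction with
  | _ J IH =>
    intro hcov
    rcases J.eq_empty_or_nonempty with rfl | hne
    · exact ⟨∅, ∅, subset_rfl.trans (Finset.empty_subset X), Finset.empty_subset _,
        fun I hI => absurd hI (Finset.notMem_empty I),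
        fun x _ I hI => absurd hI (Finset.notMem_empty I), le_rfl⟩
    · obtain ⟨I₀, hI₀, hmin⟩ := J.exists_min_image (fun I => I.2) hne
      have hS : (X.filter fun x => x ∈ Set.Icc I₀.1 I₀.2).Nonempty := by
        obtain ⟨x, hx, hxI⟩ := hcov I₀ hI₀
        exact ⟨x, Finset.mem_filter.mpr ⟨hx, hxI⟩⟩
      set p := (X.filter fun x => x ∈ Set.Icc I₀.1 I₀.2).max' hS with hp
      have hpmem := Finset.max'_mem _ hS
      rw [← hp] at hpmem
      have hpX : p ∈ X := (Finset.mem_filter.mp hpmem).1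
      have hpI₀ : p ∈ Set.Icc I₀.1 I₀.2 := (Finset.mem_filter.mp hpmem).2
      have hpmax : ∀ x ∈ X, x ∈ Set.Icc I₀.1 I₀.2 → x ≤ p := by
        intro x hx hxI
        exact Finset.le_max' _ x (Finset.mem_filter.mpr ⟨hx, hxI⟩)
      set Jrem := J.filter (fun I => p ∉ Set.Icc I.1 I.2) with hJrem
      have hsub : Jrem ⊆ J := Finset.filter_subset _ _
      have hssub : Jrem ⊂ J := by
        refine ⟨hsub, fun h => ?_⟩
        have := h hI₀
        exact (Finset.mem_filter.mp this).2 hpI₀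
      obtain ⟨X₁, J₁, hX₁X, hJ₁, hhit₁, hdisj₁, hcard₁⟩ :=
        IH Jrem hssub (fun I hI => hcov I (hsub hI))
      have hI₀notJ₁ : I₀ ∉ J₁ := fun h => (Finset.mem_filter.mp (hJ₁ h)).2 hpI₀
      refine ⟨insert p X₁, insert I₀ J₁, ?_, ?_, ?_, ?_, ?_⟩
      · exact Finset.insert_subset hpX hX₁X
      · exact Finset.insert_subset hI₀ (hJ₁.trans hsub)
      · intro I hI
        by_cases hpI : p ∈ Set.Icc I.1 I.2
        · exact ⟨p, Finset.mem_insert_self _ _, hpI⟩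
        · obtain ⟨x, hx, hxI⟩ := hhit₁ I (Finset.mem_filter.mpr ⟨hI, hpI⟩)
          exact ⟨x, Finset.mem_insert_of_mem hx, hxI⟩
      · intro x hx I hI I' hI' hxI hxI'
        -- key case analysis
        have key : ∀ I' ∈ J₁, x ∈ Set.Icc I₀.1 I₀.2 → x ∈ Set.Icc I'.1 I'.2 → False := by
          intro I' hI'mem hxI₀ hxI'
          have hI'rem : I' ∈ Jrem := hJ₁ hI'mem
          have hpnot : p ∉ Set.Icc I'.1 I'.2 := (Finset.mem_filter.mp hI'rem).2
          have hxp : x ≤ p := hpmax x hx hxI₀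
          have h2 : I₀.2 ≤ I'.2 := hmin I' (hsub hI'rem)
          exact hpnot ⟨le_trans hxI'.1 hxp, le_trans hpI₀.2 h2⟩
        rcases Finset.mem_insert.mp hI with rfl | hIm <;>
          rcases Finset.mem_insert.mp hI' with h' | hI'm
        · exact h'.symm ▸ rfl
        · exact absurd (key I' hI'm hxI hxI') (fun h => h)
        · subst h'; exact absurd (key I hIm hxI' hxI) (fun h => h)
        · exact hdisj₁ x hx I hIm I' hI'm hxI hxI'
      · calc (insert p X₁).card ≤ X₁.card + 1 := Finset.card_insert_le _ _
          _ ≤ J₁.card + 1 := by omega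
          _ = (insert I₀ J₁).card := (Finset.card_insert_of_notMem hI₀notJ₁).symm

/-- Minimum hitting set size equals maximum `X`-disjoint subfamily size,
provided every interval contains a point of `X`. -/
theorem min_hitting_eq_max_disjoint (X : Finset ℝ) (J : Finset (ℝ × ℝ))
    (hcov : ∀ I ∈ J, ∃ x ∈ X, x ∈ Set.Icc I.1 I.2) :
    ((X.powerset.filter fun X' => Hits X' J).inf'
        ⟨X, Finset.mem_filter.mpr ⟨Finset.mem_powerset_self X, hcov⟩⟩ Finset.card)
      =
    ((J.powerset.filter fun J' => XDisjoint X J').sup'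
        ⟨∅, Finset.mem_filter.mpr ⟨Finset.empty_mem_powerset J, by
          intro x _ I hI; exact absurd hI (Finset.notMem_empty I)⟩⟩ Finset.card) := by
  apply le_antisymm
  · obtain ⟨X', J', hX', hJ', hhit, hdisj, hcard⟩ := greedy X J hcov
    have hmemX' : X' ∈ X.powerset.filter fun X' => Hits X' J :=
      Finset.mem_filter.mpr ⟨Finset.mem_powerset.mpr hX', hhit⟩
    have hmemJ' : J' ∈ J.powerset.filter fun J' => XDisjoint X J' :=
      Finset.mem_filter.mpr ⟨Finset.mem_powerset.mpr hJ', hdisj⟩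
    calc _ ≤ X'.card := Finset.inf'_le _ hmemX'
      _ ≤ J'.card := hcard
      _ ≤ _ := Finset.le_sup' _ hmemJ'
  · apply Finset.sup'_le
    intro J' hJ'
    apply Finset.le_inf'
    intro X' hX'
    obtain ⟨hJ'sub, hdisj⟩ := Finset.mem_filter.mp hJ'
    obtain ⟨hX'sub, hhit⟩ := Finset.mem_filter.mp hX'
    exact weak_duality X X' J J' (Finset.mem_powerset.mp hX'sub) hhit
      (Finset.mem_powerset.mp hJ'sub) hdisj
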